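/- For every L(1,2)-edge labeling f of G_v and every edge e in S_3, at most three edges of G_v have label f(e)+1, and at most three edges of G_v have label f(e)−1. -/

import Mathlib

/-- The infinite triangular grid `T6`. -/
def T6 : SimpleGraph (ℤ × ℤ) where
  Adj u v := (v.1 - u.1, v.2 - u.2) ∈
    ({(1,0), (-1,0), (0,1), (0,-1), (1,1), (-1,-1)} : Set (ℤ × ℤ))
  symm := ⟨by
    rintro ⟨a, b⟩ ⟨c, d⟩ h
    simp only [Set.mem_insert_iff, Set.mem_singleton_iff, Prod.mk.injEq] at h ⊢
    omega⟩
  loopless := ⟨by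
    rintro ⟨a, b⟩ h
    simp only [Set.mem_insert_iff, Set.mem_singleton_iff, Prod.mk.injEq, sub_self] at h
    omega⟩

/-- `f` is an L(1,2)-edge labeling of `G`. -/
def IsL12 {V : Type*} (G : SimpleGraph V) (f : Sym2 V → ℕ) : Prop :=
  (∀ e1 ∈ G.edgeSet, ∀ e2 ∈ G.edgeSet, e1 ≠ e2 → (∃ v, v ∈ e1 ∧ v ∈ e2) →
    f e1 ≠ f e2) ∧
  (∀ e1 ∈ G.edgeSet, ∀ e2 ∈ G.edgeSet, e1 ≠ e2 → ¬ (∃ v, v ∈ e1 ∧ v ∈ e2) →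
    (∃ e3 ∈ G.edgeSet, (∃ v, v ∈ e1 ∧ v ∈ e3) ∧ (∃ v, v ∈ e2 ∧ v ∈ e3)) →
    2 ≤ |(f e1 : ℤ) - (f e2 : ℤ)|)

/-- The subgraph `G_v` of `T6`: all edges with an endpoint adjacent to `v`. -/
def Gv (v : ℤ × ℤ) : SimpleGraph (ℤ × ℤ) where
  Adj u w := T6.Adj u w ∧ (T6.Adj v u ∨ T6.Adj v w)
  symm := ⟨fun u w h => ⟨T6.symm.symm _ _ h.1, h.2.symm⟩⟩
  loopless := ⟨fun u h => T6.loopless.irrefl u h.1⟩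

/-- `S_1`: the edges of `G_v` incident to `v`. -/
def S1 (v : ℤ × ℤ) : Set (Sym2 (ℤ × ℤ)) := {e | e ∈ (Gv v).edgeSet ∧ v ∈ e}

/-- `S_2`: the edges of `G_v` both of whose endpoints are adjacent to `v`. -/
def S2 (v : ℤ × ℤ) : Set (Sym2 (ℤ × ℤ)) := {e | e ∈ (Gv v).edgeSet ∧ ∀ u ∈ e, T6.Adj v u}

/-- `S_3`: the remaining edges of `G_v`. -/
def S3 (v : ℤ × ℤ) : Set (Sym2 (ℤ × ℤ)) := (Gv v).edgeSet \ (S1 v ∪ S2 v)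
abbrev Pt := ℤ × ℤ
abbrev Ed := Pt × Pt

def dirsL : List Pt := [(1,0),(-1,0),(0,1),(0,-1),(1,1),(-1,-1)]

def edL : List Ed :=
  [((-2,-2),(-1,-1)), ((-1,-1),(-2,-2)), ((-2,-1),(-1,-1)), ((-1,-1),(-2,-1)), ((-2,-1),(-1,0)), ((-1,0),(-2,-1)), ((-2,0),(-1,0)), ((-1,0),(-2,0)), ((-1,-2),(-1,-1)), ((-1,-1),(-1,-2)), ((-1,-2),(0,-1)), ((0,-1),(-1,-2)), ((-1,-1),(-1,0)), ((-1,0),(-1,-1)), ((-1,-1),(0,-1)), ((0,-1),(-1,-1)), ((-1,-1),(0,0)), ((0,0),(-1,-1)), ((-1,0),(-1,1)), ((-1,1),(-1,0)), ((-1,0),(0,0)), ((0,0),(-1,0)), ((-1,0),(0,1)), ((0,1),(-1,0)), ((-1,1),(0,1)), ((0,1),(-1,1)), ((0,-2),(0,-1)), ((0,-1),(0,-2)), ((0,-1),(0,0)), ((0,0),(0,-1)), ((0,-1),(1,-1)), ((1,-1),(0,-1)), ((0,-1),(1,0)), ((1,0),(0,-1)), ((0,0),(0,1)), ((0,1),(0,0)),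 ((0,0),(1,0)), ((1,0),(0,0)), ((0,0),(1,1)), ((1,1),(0,0)), ((0,1),(0,2)), ((0,2),(0,1)), ((0,1),(1,1)), ((1,1),(0,1)), ((0,1),(1,2)), ((1,2),(0,1)), ((1,-1),(1,0)), ((1,0),(1,-1)), ((1,0),(1,1)), ((1,1),(1,0)), ((1,0),(2,0)), ((2,0),(1,0)), ((1,0),(2,1)), ((2,1),(1,0)), ((1,1),(1,2)), ((1,2),(1,1)), ((1,1),(2,1)), ((2,1),(1,1)), ((1,1),(2,2)), ((2,2),(1,1))]
def col0 : List Ed :=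
  [((-1,-1),(0,0)), ((0,0),(-1,-1)), ((-1,0),(0,0)), ((0,0),(-1,0)), ((-1,0),(0,1)), ((0,1),(-1,0)), ((-1,1),(0,1)), ((0,1),(-1,1)), ((0,-1),(0,0)), ((0,0),(0,-1)), ((0,0),(0,1)), ((0,1),(0,0)), ((0,0),(1,0)), ((1,0),(0,0)), ((0,0),(1,1)), ((1,1),(0,0)), ((0,1),(0,2)), ((0,2),(0,1)), ((0,1),(1,1)), ((1,1),(0,1)), ((0,1),(1,2)), ((1,2),(0,1)), ((1,0),(1,1)), ((1,1),(1,0)), ((1,1),(1,2)), ((1,2),(1,1)), ((1,1),(2,1)), ((2,1),(1,1)), ((1,1),(2,2)), ((2,2),(1,1))]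
def col1 : List Ed :=
  [((-2,-2),(-1,-1)), ((-1,-1),(-2,-2)), ((-2,-1),(-1,-1)), ((-1,-1),(-2,-1)), ((-2,-1),(-1,0)), ((-1,0),(-2,-1)), ((-2,0),(-1,0)), ((-1,0),(-2,0)), ((-1,-2),(-1,-1)), ((-1,-1),(-1,-2)), ((-1,-1),(-1,0)), ((-1,0),(-1,-1)), ((-1,-1),(0,-1)), ((0,-1),(-1,-1)), ((-1,0),(-1,1)), ((-1,1),(-1,0))]

def col (p : Ed) : ℕ := if p ∈ col0 then 0 else if p ∈ col1 then 1 else 2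

def eqE (p q : Ed) : Prop := p = q ∨ p = (q.2, q.1)
def touchp (r p : Ed) : Prop := r.1 = p.1 ∨ r.1 = p.2 ∨ r.2 = p.1 ∨ r.2 = p.2
def connL (p q : Ed) : Prop := ∃ r ∈ edL, touchp r p ∧ touchp r q
def okOff (p : Ed) : Prop :=
  (p.2.1 - p.1.1, p.2.2 - p.1.2) ∈ dirsL ∧ (p.1 ∈ dirsL ∨ p.2 ∈ dirsL)

lemma ok1_of_mem : ∀ p ∈ edL, ((p.2.1 - p.1.1, p.2.2 - p.1.2) : Pt) ∈ dirsL := by decide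
lemma ok2_of_mem : ∀ p ∈ edL, p.1 ∈ dirsL ∨ p.2 ∈ dirsL := by decide
lemma col_lt : ∀ p ∈ edL, col p < 3 := by unfold col; decide
lemma bridge1 : ∀ d ∈ dirsL, ∀ a ∈ dirsL, ((a, (a.1 + d.1, a.2 + d.2)) : Ed) ∈ edL := by
  decide
lemma bridge2 : ∀ d ∈ dirsL, ∀ b ∈ dirsL, (((b.1 - d.1, b.2 - d.2), b) : Ed) ∈ edL := by
  decide
set_option maxRecDepth 100000 in
lemma keyA : ∀ p ∈ edL, ∀ q ∈ edL, col p = col q → eqE p q ∨ connL p q := by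
  unfold col eqE connL touchp; decide

/-- The edge of `Gv v` given by offset pair `p`. -/
def edgeOf (v : Pt) (p : Ed) : Sym2 Pt :=
  s((v.1 + p.1.1, v.2 + p.1.2), (v.1 + p.2.1, v.2 + p.2.2))

lemma mem_edL_of_adj {v u w : Pt} (h : (Gv v).Adj u w) :
    ((u.1 - v.1, u.2 - v.2), (w.1 - v.1, w.2 - v.2)) ∈ edL := by
  obtain ⟨h1, h2⟩ := h
  have hd : ((w.1 - u.1, w.2 - u.2) : Pt) ∈ dirsL := by
    simp only [T6, Set.mem_insert_iff, Set.mem_singleton_iff] at h1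
    simp only [dirsL, List.mem_cons, List.not_mem_nil, or_false]
    exact h1
  rcases h2 with h2 | h2
  · have ha : ((u.1 - v.1, u.2 - v.2) : Pt) ∈ dirsL := by
      simp only [T6, Set.mem_insert_iff, Set.mem_singleton_iff] at h2
      simp only [dirsL, List.mem_cons, List.not_mem_nil, or_false]
      exact h2
    have hm := bridge1 _ hd _ ha
    have he : (((u.1 - v.1) + (w.1 - u.1), (u.2 - v.2) + (w.2 - u.2)) : Pt)
        = (w.1 - v.1, w.2 - v.2) := by
      rw [Prod.mk.injEq]; constructor <;> ring
    rwa [he] at hm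
  · have hb : ((w.1 - v.1, w.2 - v.2) : Pt) ∈ dirsL := by
      simp only [T6, Set.mem_insert_iff, Set.mem_singleton_iff] at h2
      simp only [dirsL, List.mem_cons, List.not_mem_nil, or_false]
      exact h2
    have hm := bridge2 _ hd _ hb
    have he : (((w.1 - v.1) - (w.1 - u.1), (w.2 - v.2) - (w.2 - u.2)) : Pt)
        = (u.1 - v.1, u.2 - v.2) := by
      rw [Prod.mk.injEq]; constructor <;> ring
    rwa [he] at hm

lemma edgeOf_eq {v u w : Pt} :
    edgeOf v ((u.1 - v.1, u.2 - v.2), (w.1 - v.1, w.2 - v.2)) = s(u, w) := by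
  have h1 : (v.1 + (u.1 - v.1), v.2 + (u.2 - v.2)) = u := by
    rw [Prod.ext_iff]; constructor <;> ring
  have h2 : (v.1 + (w.1 - v.1), v.2 + (w.2 - v.2)) = w := by
    rw [Prod.ext_iff]; constructor <;> ring
  simp only [edgeOf, h1, h2]

lemma exists_offsets {v : Pt} {e : Sym2 Pt} (he : e ∈ (Gv v).edgeSet) :
    ∃ p ∈ edL, e = edgeOf v p := by
  induction e using Sym2.inductionOn with
  | hf u w =>
    rw [SimpleGraph.mem_edgeSet] at he
    exact ⟨_, mem_edL_of_adj he, (edgeOf_eq (v := v)).symm⟩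

lemma Gv_adj_iff {v u w : Pt} : (Gv v).Adj u w ↔ T6.Adj u w ∧ (T6.Adj v u ∨ T6.Adj v w) :=
  Iff.rfl

lemma T6_adj_iff {u w : Pt} : T6.Adj u w ↔
    ((w.1 - u.1 = 1 ∧ w.2 - u.2 = 0) ∨ (w.1 - u.1 = -1 ∧ w.2 - u.2 = 0) ∨
     (w.1 - u.1 = 0 ∧ w.2 - u.2 = 1) ∨ (w.1 - u.1 = 0 ∧ w.2 - u.2 = -1) ∨
     (w.1 - u.1 = 1 ∧ w.2 - u.2 = 1) ∨ (w.1 - u.1 = -1 ∧ w.2 - u.2 = -1)) := by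
  show _ ∈ ({(1,0), (-1,0), (0,1), (0,-1), (1,1), (-1,-1)} : Set (ℤ × ℤ)) ↔ _
  simp only [Set.mem_insert_iff, Set.mem_singleton_iff, Prod.ext_iff]



lemma T6_adj_of_dir {v1 v2 d1 d2 : ℤ} (h : ((d1, d2) : Pt) ∈ dirsL) :
    T6.Adj (v1, v2) (v1 + d1, v2 + d2) := by
  simp only [dirsL, List.mem_cons, List.not_mem_nil, or_false, Prod.mk.injEq] at h
  show _ ∈ ({(1,0), (-1,0), (0,1), (0,-1), (1,1), (-1,-1)} : Set (ℤ × ℤ))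
  simp only [Set.mem_insert_iff, Set.mem_singleton_iff, Prod.mk.injEq]
  omega

lemma adj_of_ok {v1 v2 a1 a2 b1 b2 : ℤ} (h1 : ((b1 - a1, b2 - a2) : Pt) ∈ dirsL)
    (h2 : ((a1, a2) : Pt) ∈ dirsL ∨ ((b1, b2) : Pt) ∈ dirsL) :
    (Gv (v1, v2)).Adj (v1 + a1, v2 + a2) (v1 + b1, v2 + b2) := by
  refine ⟨?_, ?_⟩
  · have ht := T6_adj_of_dir (v1 := v1 + a1) (v2 := v2 + a2) h1
    have he : ((v1 + a1 + (b1 - a1), v2 + a2 + (b2 - a2)) : Pt) = (v1 + b1, v2 + b2) := by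
      rw [Prod.mk.injEq]; constructor <;> ring
    rwa [he] at ht
  · rcases h2 with h2 | h2
    · exact Or.inl (T6_adj_of_dir h2)
    · exact Or.inr (T6_adj_of_dir h2)

lemma edgeOf_mem {v : Pt} {p : Ed} (hp : p ∈ edL) : edgeOf v p ∈ (Gv v).edgeSet := by
  obtain ⟨v1, v2⟩ := v
  obtain ⟨⟨a1, a2⟩, ⟨b1, b2⟩⟩ := p
  have h1 : ((b1 - a1, b2 - a2) : Pt) ∈ dirsL := ok1_of_mem _ hp
  have h2 : ((a1, a2) : Pt) ∈ dirsL ∨ ((b1, b2) : Pt) ∈ dirsL := ok2_of_mem _ hp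
  exact (SimpleGraph.mem_edgeSet _).mpr (adj_of_ok h1 h2)

lemma shared_of_touchp {v : Pt} {r p : Ed} (h : touchp r p) :
    ∃ x, x ∈ edgeOf v r ∧ x ∈ edgeOf v p := by
  rcases h with h | h | h | h
  · exact ⟨_, Sym2.mem_mk_left _ _, by rw [edgeOf, h]; exact Sym2.mem_mk_left _ _⟩
  · exact ⟨_, Sym2.mem_mk_left _ _, by rw [edgeOf, h]; exact Sym2.mem_mk_right _ _⟩
  · exact ⟨_, Sym2.mem_mk_right _ _, by rw [edgeOf, h]; exact Sym2.mem_mk_left _ _⟩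
  · exact ⟨_, Sym2.mem_mk_right _ _, by rw [edgeOf, h]; exact Sym2.mem_mk_right _ _⟩

lemma edgeOf_eq_of_eqE {v : Pt} {p q : Ed} (h : eqE p q) : edgeOf v p = edgeOf v q := by
  rcases h with h | h
  · rw [h]
  · rw [h]; exact Sym2.eq_swap

lemma pairstep {v : Pt} {p q : Ed} {a b : Sym2 Pt} (hp : p ∈ edL) (hq : q ∈ edL)
    (ha : a = edgeOf v p) (hb : b = edgeOf v q) (hcol : col p = col q)
    (hne : a ≠ b)
    (hnc : ¬ ∃ e' ∈ (Gv v).edgeSet, (∃ x, x ∈ a ∧ x ∈ e') ∧ (∃ x, x ∈ b ∧ x ∈ e')) :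
    False := by
  rcases keyA p hp q hq hcol with h | h
  · exact hne (by rw [ha, hb]; exact edgeOf_eq_of_eqE h)
  · obtain ⟨r, hr, ht1, ht2⟩ := h
    refine hnc ⟨edgeOf v r, edgeOf_mem hr, ?_, ?_⟩
    · obtain ⟨x, hx1, hx2⟩ := shared_of_touchp (v := v) ht1
      exact ⟨x, by rw [ha]; exact hx2, hx1⟩
    · obtain ⟨x, hx1, hx2⟩ := shared_of_touchp (v := v) ht2
      exact ⟨x, by rw [hb]; exact hx2, hx1⟩

lemma core (v : Pt) (e1 e2 e3 e4 : Sym2 Pt)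
    (h1 : e1 ∈ (Gv v).edgeSet) (h2 : e2 ∈ (Gv v).edgeSet)
    (h3 : e3 ∈ (Gv v).edgeSet) (h4 : e4 ∈ (Gv v).edgeSet)
    (hfar : ∀ a b : Sym2 Pt, (a = e1 ∨ a = e2 ∨ a = e3 ∨ a = e4) →
      (b = e1 ∨ b = e2 ∨ b = e3 ∨ b = e4) → a ≠ b →
      ¬ ∃ e' ∈ (Gv v).edgeSet, (∃ x, x ∈ a ∧ x ∈ e') ∧ (∃ x, x ∈ b ∧ x ∈ e')) :
    e1 = e2 ∨ e1 = e3 ∨ e1 = e4 ∨ e2 = e3 ∨ e2 = e4 ∨ e3 = e4 := by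
  by_contra hcon
  push_neg at hcon
  obtain ⟨n12, n13, n14, n23, n24, n34⟩ := hcon
  obtain ⟨p1, hp1, he1⟩ := exists_offsets h1
  obtain ⟨p2, hp2, he2⟩ := exists_offsets h2
  obtain ⟨p3, hp3, he3⟩ := exists_offsets h3
  obtain ⟨p4, hp4, he4⟩ := exists_offsets h4
  have c1 := col_lt p1 hp1
  have c2 := col_lt p2 hp2
  have c3 := col_lt p3 hp3
  have c4 := col_lt p4 hp4
  have hcc : col p1 = col p2 ∨ col p1 = col p3 ∨ col p1 = col p4 ∨
      col p2 = col p3 ∨ col p2 = col p4 ∨ col p3 = col p4 := by omega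
  rcases hcc with h | h | h | h | h | h
  · exact pairstep hp1 hp2 he1 he2 h n12
      (hfar e1 e2 (Or.inl rfl) (Or.inr (Or.inl rfl)) n12)
  · exact pairstep hp1 hp3 he1 he3 h n13
      (hfar e1 e3 (Or.inl rfl) (Or.inr (Or.inr (Or.inl rfl))) n13)
  · exact pairstep hp1 hp4 he1 he4 h n14
      (hfar e1 e4 (Or.inl rfl) (Or.inr (Or.inr (Or.inr rfl))) n14)
  · exact pairstep hp2 hp3 he2 he3 h n23
      (hfar e2 e3 (Or.inr (Or.inl rfl)) (Or.inr (Or.inr (Or.inl rfl))) n23)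
  · exact pairstep hp2 hp4 he2 he4 h n24
      (hfar e2 e4 (Or.inr (Or.inl rfl)) (Or.inr (Or.inr (Or.inr rfl))) n24)
  · exact pairstep hp3 hp4 he3 he4 h n34
      (hfar e3 e4 (Or.inr (Or.inr (Or.inl rfl))) (Or.inr (Or.inr (Or.inr rfl))) n34)

lemma nofar {v : Pt} {f : Sym2 Pt → ℕ} (hf : IsL12 (Gv v) f) {a b : Sym2 Pt}
    (ha : a ∈ (Gv v).edgeSet) (hb : b ∈ (Gv v).edgeSet) (hlab : f a = f b)
    (hne : a ≠ b) :
    ¬ ∃ e' ∈ (Gv v).edgeSet, (∃ x, x ∈ a ∧ x ∈ e') ∧ (∃ x, x ∈ b ∧ x ∈ e') := by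
  intro hconn
  have hsh : ¬ ∃ x, x ∈ a ∧ x ∈ b := fun hx => hf.1 a ha b hb hne hx hlab
  have h2 := hf.2 a ha b hb hne hsh hconn
  rw [hlab] at h2
  simp at h2

/-- For an edge `e ∈ S_3`, at most three edges of `G_v` have label `f e + 1`, and at
most three edges of `G_v` have label `f e - 1`. -/
theorem S3_adjacent_labels_at_most_thrice (v : ℤ × ℤ) (f : Sym2 (ℤ × ℤ) → ℕ)
    (hf : IsL12 (Gv v) f) : ∀ e ∈ S3 v,
    (∀ e1 ∈ (Gv v).edgeSet, ∀ e2 ∈ (Gv v).edgeSet, ∀ e3 ∈ (Gv v).edgeSet,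
      ∀ e4 ∈ (Gv v).edgeSet,
      f e1 = f e + 1 → f e2 = f e + 1 → f e3 = f e + 1 → f e4 = f e + 1 →
      e1 = e2 ∨ e1 = e3 ∨ e1 = e4 ∨ e2 = e3 ∨ e2 = e4 ∨ e3 = e4) ∧
    (∀ e1 ∈ (Gv v).edgeSet, ∀ e2 ∈ (Gv v).edgeSet, ∀ e3 ∈ (Gv v).edgeSet,
      ∀ e4 ∈ (Gv v).edgeSet,
      (f e1 : ℤ) = (f e : ℤ) - 1 → (f e2 : ℤ) = (f e : ℤ) - 1 →
      (f e3 : ℤ) = (f e : ℤ) - 1 → (f e4 : ℤ) = (f e : ℤ) - 1 →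
      e1 = e2 ∨ e1 = e3 ∨ e1 = e4 ∨ e2 = e3 ∨ e2 = e4 ∨ e3 = e4) := by
  intro e _he
  constructor
  · intro e1 h1 e2 h2 e3 h3 e4 h4 l1 l2 l3 l4
    refine core v e1 e2 e3 e4 h1 h2 h3 h4 ?_
    rintro a b ha hb hne
    have hma : a ∈ (Gv v).edgeSet := by rcases ha with h|h|h|h <;> rw [h] <;> assumption
    have hmb : b ∈ (Gv v).edgeSet := by rcases hb with h|h|h|h <;> rw [h] <;> assumption
    have hla : f a = f e + 1 := by rcases ha with h|h|h|h <;> rw [h] <;> assumption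
    have hlb : f b = f e + 1 := by rcases hb with h|h|h|h <;> rw [h] <;> assumption
    exact nofar hf hma hmb (hla.trans hlb.symm) hne
  · intro e1 h1 e2 h2 e3 h3 e4 h4 l1 l2 l3 l4
    refine core v e1 e2 e3 e4 h1 h2 h3 h4 ?_
    rintro a b ha hb hne
    have hma : a ∈ (Gv v).edgeSet := by rcases ha with h|h|h|h <;> rw [h] <;> assumption
    have hmb : b ∈ (Gv v).edgeSet := by rcases hb with h|h|h|h <;> rw [h] <;> assumption
    have hla : (f a : ℤ) = (f e : ℤ) - 1 := by
      rcases ha with h|h|h|h <;> rw [h] <;> assumption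
    have hlb : (f b : ℤ) = (f e : ℤ) - 1 := by
      rcases hb with h|h|h|h <;> rw [h] <;> assumption
    have hab : f a = f b := by omega
    exact nofar hf hma hmb hab hne
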